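/- Let c₃ > −1 and K ∈ ℝ, and define F(z) := ∫₀^z (1+t⁴)^{−1/2} dt for z ∈ ℝ. For every c₄ ∈ ℝ, the function y(z) := −(K/(2(c₃+1)))·((2c₃+1)·√(1+z⁴)·F(z) − z) + c₄·√(1+z⁴) is differentiable on ℝ and satisfies the linear ODE (1+z⁴)·y'(z) − 2z³·y(z) = K·(1/(1+c₃) − (1+z⁴)) for all z ∈ ℝ. Conversely, every differentiable function y: ℝ → ℝ satisfying this ODE is of this form for a unique c₄ ∈ ℝ. -/

import Mathlib

open Real Filter Topology

/-- `F(z) = ∫₀^z dt/√(1+t⁴)`, the function whose value is `z·₂F₁(1/4,1/2;5/4;−z⁴)`. -/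
noncomputable def Fint (z : ℝ) : ℝ := ∫ t in (0:ℝ)..z, 1 / Real.sqrt (1 + t ^ 4)

/-- The general solution `y(z) = −(K/(2(c₃+1)))·((2c₃+1)√(1+z⁴)F(z) − z) + c₄√(1+z⁴)`
of the linear ODE for the squared effective radius. -/
noncomputable def ySol (c₃ K c₄ : ℝ) (z : ℝ) : ℝ :=
  -(K / (2 * (c₃ + 1))) * ((2 * c₃ + 1) * Real.sqrt (1 + z ^ 4) * Fint z - z)
    + c₄ * Real.sqrt (1 + z ^ 4)

lemma pos4 (z : ℝ) : 0 < 1 + z ^ 4 := by positivity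

lemma sqrt_pos4 (z : ℝ) : 0 < Real.sqrt (1 + z ^ 4) :=
  Real.sqrt_pos.mpr (pos4 z)

lemma sq_sqrt4 (z : ℝ) : Real.sqrt (1 + z ^ 4) ^ 2 = 1 + z ^ 4 :=
  Real.sq_sqrt (pos4 z).le

lemma hasDerivAt_sqrt4 (z : ℝ) :
    HasDerivAt (fun z : ℝ => Real.sqrt (1 + z ^ 4))
      (2 * z ^ 3 / Real.sqrt (1 + z ^ 4)) z := by
  have h : HasDerivAt (fun z : ℝ => 1 + z ^ 4) (4 * z ^ 3) z := by
    simpa using (hasDerivAt_pow 4 z).const_add 1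
  have h2 := h.sqrt (pos4 z).ne'
  have hS : Real.sqrt (1 + z ^ 4) ≠ 0 := (sqrt_pos4 z).ne'
  have heq : 4 * z ^ 3 / (2 * Real.sqrt (1 + z ^ 4))
      = 2 * z ^ 3 / Real.sqrt (1 + z ^ 4) := by
    field_simp
    ring
  rwa [heq] at h2

lemma cont_integrand : Continuous fun t : ℝ => 1 / Real.sqrt (1 + t ^ 4) :=
  continuous_const.div (Real.continuous_sqrt.comp (by continuity))
    fun t => (sqrt_pos4 t).ne'

lemma hasDerivAt_Fint (z : ℝ) :
    HasDerivAt Fint (1 / Real.sqrt (1 + z ^ 4)) z :=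
  (cont_integrand.integral_hasStrictDerivAt 0 z).hasDerivAt

lemma hasDerivAt_ySol (c₃ K c₄ z : ℝ) :
    HasDerivAt (ySol c₃ K c₄)
      (-(K / (2 * (c₃ + 1))) *
        ((2 * c₃ + 1) * (2 * z ^ 3 / Real.sqrt (1 + z ^ 4)) * Fint z
          + (2 * c₃ + 1) * Real.sqrt (1 + z ^ 4) * (1 / Real.sqrt (1 + z ^ 4)) - 1)
        + c₄ * (2 * z ^ 3 / Real.sqrt (1 + z ^ 4))) z := by
  have hS := hasDerivAt_sqrt4 z
  have hF := hasDerivAt_Fint z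
  have h1 := (hS.const_mul (2 * c₃ + 1)).mul hF
  have h2 := ((h1.sub (hasDerivAt_id z)).const_mul (-(K / (2 * (c₃ + 1))))).add
    (hS.const_mul c₄)
  have hfun : (fun x : ℝ => -(K / (2 * (c₃ + 1))) *
      ((2 * c₃ + 1) * Real.sqrt (1 + x ^ 4) * Fint x - id x)
      + c₄ * Real.sqrt (1 + x ^ 4)) = ySol c₃ K c₄ := by
    funext x
    simp [ySol]
  rw [← hfun]
  exact h2

/-- For `c₃ > −1` and `K ∈ ℝ`: for every `c₄`, the function `ySol c₃ K c₄`
is differentiable on `ℝ` and satisfies `(1+z⁴)y' − 2z³y = K(1/(1+c₃) − (1+z⁴))`; conversely,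
every differentiable solution of this ODE equals `ySol c₃ K c₄` for a unique `c₄`. -/
theorem rtilde_ODE_general_solution (c₃ K : ℝ) (hc₃ : -1 < c₃) :
    (∀ c₄ : ℝ,
      Differentiable ℝ (ySol c₃ K c₄) ∧
      ∀ z : ℝ, (1 + z ^ 4) * deriv (ySol c₃ K c₄) z - 2 * z ^ 3 * ySol c₃ K c₄ z
        = K * (1 / (1 + c₃) - (1 + z ^ 4))) ∧
    (∀ y : ℝ → ℝ, Differentiable ℝ y →
      (∀ z : ℝ, (1 + z ^ 4) * deriv y z - 2 * z ^ 3 * y z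
        = K * (1 / (1 + c₃) - (1 + z ^ 4))) →
      ∃! c₄ : ℝ, y = ySol c₃ K c₄) := by
  have hc1 : c₃ + 1 ≠ 0 := by linarith
  have hc1' : (1 : ℝ) + c₃ ≠ 0 := by linarith
  have hode : ∀ c₄ z : ℝ,
      (1 + z ^ 4) * deriv (ySol c₃ K c₄) z - 2 * z ^ 3 * ySol c₃ K c₄ z
        = K * (1 / (1 + c₃) - (1 + z ^ 4)) := by
    intro c₄ z
    rw [(hasDerivAt_ySol c₃ K c₄ z).deriv]
    simp only [ySol]
    set S := Real.sqrt (1 + z ^ 4) with hSdef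
    have hS0 : S ≠ 0 := (sqrt_pos4 z).ne'
    have hS2 : S ^ 2 = 1 + z ^ 4 := sq_sqrt4 z
    rw [← hS2]
    field_simp
    linear_combination (2*K*(1+c₃)) * hS2
  constructor
  · intro c₄
    exact ⟨fun z => (hasDerivAt_ySol c₃ K c₄ z).differentiableAt, hode c₄⟩
  · intro y hy hyode
    have hySol0 : ∀ c₄ : ℝ, ySol c₃ K c₄ 0 = c₄ := by
      intro c₄
      simp [ySol, Fint]
    refine ⟨y 0, ?_, ?_⟩
    · obtain ⟨d, hd⟩ : ∃ d : ℝ → ℝ, d = fun z => y z - ySol c₃ K (y 0) z := ⟨_, rfl⟩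
      have hddiff : Differentiable ℝ d := by
        rw [hd]
        exact hy.sub fun z => (hasDerivAt_ySol c₃ K (y 0) z).differentiableAt
      have hd0 : d 0 = 0 := by simp [hd, hySol0]
      have hdode : ∀ z : ℝ, (1 + z ^ 4) * deriv d z = 2 * z ^ 3 * d z := by
        intro z
        have h1 := hyode z
        have h2 := hode (y 0) z
        have h3 : deriv d z = deriv y z - deriv (ySol c₃ K (y 0)) z := by
          rw [hd]
          exact deriv_sub (hy z) (hasDerivAt_ySol c₃ K (y 0) z).differentiableAt
        rw [h3, hd]
        simp only []
        ring_nf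
        ring_nf at h1 h2
        linarith
      obtain ⟨g, hg⟩ : ∃ g : ℝ → ℝ, g = fun z => d z / Real.sqrt (1 + z ^ 4) :=
        ⟨_, rfl⟩
      have hgderiv : ∀ z : ℝ, HasDerivAt g 0 z := by
        intro z
        have hS0 : Real.sqrt (1 + z ^ 4) ≠ 0 := (sqrt_pos4 z).ne'
        have hS2 := sq_sqrt4 z
        have hdz := (hddiff z).hasDerivAt
        have h := hdz.div (hasDerivAt_sqrt4 z) hS0
        rw [show (d / fun z => Real.sqrt (1 + z ^ 4)) = g from hg.symm] at h
        have hdz' : deriv d z = 2 * z ^ 3 * d z / (1 + z ^ 4) := by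
          rw [eq_div_iff (pos4 z).ne', mul_comm]
          exact hdode z
        have hzero : (deriv d z * Real.sqrt (1 + z ^ 4)
            - d z * (2 * z ^ 3 / Real.sqrt (1 + z ^ 4))) / Real.sqrt (1 + z ^ 4) ^ 2
            = 0 := by
          rw [hdz', ← hS2]
          field_simp
          linear_combination (2*z^3*d z) * Real.sq_sqrt (sq_nonneg (Real.sqrt (1 + z ^ 4)))
        rwa [hzero] at h
      have hgconst : ∀ z : ℝ, g z = g 0 :=
        fun z => is_const_of_deriv_eq_zero
          (fun x => (hgderiv x).differentiableAt)
          (fun x => (hgderiv x).deriv) z 0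
      have hdzero : ∀ z : ℝ, d z = 0 := by
        intro z
        have h := hgconst z
        have hg0 : g 0 = 0 := by simp [hg, hd0]
        rw [hg0, hg] at h
        have hS0 : Real.sqrt (1 + z ^ 4) ≠ 0 := (sqrt_pos4 z).ne'
        simpa [div_eq_zero_iff, hS0] using h
      funext z
      have h := hdzero z
      rw [hd] at h
      simp only [] at h
      linarith
    · intro c₄' hc₄'
      have h := congrFun hc₄' 0
      rw [hySol0 c₄'] at h
      exact h.symm
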